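/- Define β(t) = q(1−q)(μ²/ς²)·sinh(β₂t/2) / (β₂·cosh(β₂t/2) + β₁·sinh(β₂t/2)) for t ≥ 0. Then the denominator β₂·cosh(β₂t/2) + β₁·sinh(β₂t/2) is strictly positive for every t ≥ 0, β(0) = 0, and β satisfies the Riccati equation β'(t) = −(σ²(1−qρ²)/(2(1−q)))·β(t)² − β₁·β(t) + q(1−q)μ²/(2ς²) for all t ≥ 0. -/

import Mathlib

set_option maxHeartbeats 1000000

lemma riccati_alg (A C b1 b2 s c : ℝ) (hD : b2 * c + b1 * s ≠ 0)
    (hb : b2 ^ 2 = b1 ^ 2 + 2 * C * A) :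
    -C * (A * s / (b2 * c + b1 * s)) ^ 2 - b1 * (A * s / (b2 * c + b1 * s)) + A / 2 =
      (A * (c * (b2 / 2)) * (b2 * c + b1 * s) -
        A * s * (b2 * (s * (b2 / 2)) + b1 * (c * (b2 / 2)))) / (b2 * c + b1 * s) ^ 2 := by
  have key : A * s / (b2 * c + b1 * s) * (b2 * c + b1 * s) = A * s := div_mul_cancel₀ _ hD
  rw [eq_div_iff (pow_ne_zero 2 hD)]
  linear_combination (-C * (A * s / (b2 * c + b1 * s) * (b2 * c + b1 * s) + A * s) -
    b1 * (b2 * c + b1 * s)) * key + (A * s ^ 2 / 2) * hb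

theorem stmt10 (k m μ ς σ ρ q : ℝ)
    (hk : 0 < k) (hm : 0 < m) (hμ : μ ≠ 0) (hς : 0 < ς) (hσ : 0 < σ)
    (hρ : ρ ∈ Set.Ioo (-1 : ℝ) 1) (hq : q ∈ Set.Ioo (0 : ℝ) 1)
    (β₁ β₂ : ℝ)
    (hβ₁ : β₁ = k + q * μ * ρ * σ / ς)
    (hβ₂ : β₂ = Real.sqrt (β₁ ^ 2 + q * (1 - q * ρ ^ 2) * μ ^ 2 * σ ^ 2 / ς ^ 2))
    (β : ℝ → ℝ)
    (hβ : ∀ t, β t = q * (1 - q) * (μ ^ 2 / ς ^ 2) * Real.sinh (β₂ * t / 2) /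
        (β₂ * Real.cosh (β₂ * t / 2) + β₁ * Real.sinh (β₂ * t / 2))) :
    (∀ t ≥ (0 : ℝ), 0 < β₂ * Real.cosh (β₂ * t / 2) + β₁ * Real.sinh (β₂ * t / 2)) ∧
    β 0 = 0 ∧
    (∀ t ≥ (0 : ℝ), HasDerivAt β
      (-(σ ^ 2 * (1 - q * ρ ^ 2) / (2 * (1 - q))) * (β t) ^ 2 - β₁ * β t
        + q * (1 - q) * μ ^ 2 / (2 * ς ^ 2)) t) := by
  obtain ⟨hq0, hq1⟩ := hq
  obtain ⟨hρ1, hρ2⟩ := hρ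
  have hρsq : ρ ^ 2 < 1 := by nlinarith
  have hqρ : 0 < 1 - q * ρ ^ 2 := by nlinarith [sq_nonneg ρ]
  have hμsq : 0 < μ ^ 2 := by positivity
  have hc0 : 0 < q * (1 - q * ρ ^ 2) * μ ^ 2 * σ ^ 2 / ς ^ 2 := by positivity
  have hβ₂sq : β₂ ^ 2 = β₁ ^ 2 + q * (1 - q * ρ ^ 2) * μ ^ 2 * σ ^ 2 / ς ^ 2 := by
    rw [hβ₂, Real.sq_sqrt (by nlinarith [sq_nonneg β₁])]
  have hβ₂pos : 0 < β₂ := by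
    rw [hβ₂]; exact Real.sqrt_pos.mpr (by nlinarith [sq_nonneg β₁])
  have habs : |β₁| < β₂ := by
    rw [← Real.sqrt_sq_eq_abs]
    rw [hβ₂]
    exact Real.sqrt_lt_sqrt (sq_nonneg β₁) (by linarith [hc0])
  -- denominator positivity
  have hD : ∀ x : ℝ, 0 < β₂ * Real.cosh x + β₁ * Real.sinh x := by
    intro x
    have hcosh := Real.cosh_pos x
    have hsq := Real.cosh_sq x
    have h1 : |Real.sinh x| < Real.cosh x := by
      rw [abs_lt]; constructor <;> nlinarith [sq_nonneg (Real.sinh x + Real.cosh x), sq_nonneg (Real.sinh x - Real.cosh x)]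
    have h2 : β₁ * Real.sinh x ≥ -(|β₁| * |Real.sinh x|) := by
      rw [← abs_mul]; exact neg_abs_le _
    have h3 : |β₁| * |Real.sinh x| < β₂ * Real.cosh x := by
      have := abs_nonneg (Real.sinh x)
      have := abs_nonneg β₁
      nlinarith
    linarith
  refine ⟨fun t _ => hD _, ?_, ?_⟩
  · rw [hβ]; simp
  · intro t _
    have hDpos := hD (β₂ * t / 2)
    have hDne : β₂ * Real.cosh (β₂ * t / 2) + β₁ * Real.sinh (β₂ * t / 2) ≠ 0 := ne_of_gt hDpos
    have h1q : (1 : ℝ) - q ≠ 0 := by linarith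
    have hςne : ς ≠ 0 := ne_of_gt hς
    have hb : β₂ ^ 2 = β₁ ^ 2 + 2 * (σ ^ 2 * (1 - q * ρ ^ 2) / (2 * (1 - q))) *
        (q * (1 - q) * (μ ^ 2 / ς ^ 2)) := by
      rw [hβ₂sq]
      congr 1
      field_simp
    have hu : HasDerivAt (fun t : ℝ => β₂ * t / 2) (β₂ / 2) t := by
      simpa using ((hasDerivAt_id t).const_mul β₂).div_const 2
    have hs : HasDerivAt (fun t : ℝ => Real.sinh (β₂ * t / 2))
        (Real.cosh (β₂ * t / 2) * (β₂ / 2)) t :=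
      hu.sinh
    have hc : HasDerivAt (fun t : ℝ => Real.cosh (β₂ * t / 2))
        (Real.sinh (β₂ * t / 2) * (β₂ / 2)) t :=
      hu.cosh
    have hDder : HasDerivAt
        (fun t : ℝ => β₂ * Real.cosh (β₂ * t / 2) + β₁ * Real.sinh (β₂ * t / 2))
        (β₂ * (Real.sinh (β₂ * t / 2) * (β₂ / 2)) + β₁ * (Real.cosh (β₂ * t / 2) * (β₂ / 2))) t :=
      (hc.const_mul β₂).add (hs.const_mul β₁)
    have hN : HasDerivAt (fun t : ℝ => q * (1 - q) * (μ ^ 2 / ς ^ 2) * Real.sinh (β₂ * t / 2))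
        (q * (1 - q) * (μ ^ 2 / ς ^ 2) * (Real.cosh (β₂ * t / 2) * (β₂ / 2))) t :=
      hs.const_mul _
    have hder := hN.div hDder hDne
    have hfun : β = fun t => q * (1 - q) * (μ ^ 2 / ς ^ 2) * Real.sinh (β₂ * t / 2) /
        (β₂ * Real.cosh (β₂ * t / 2) + β₁ * Real.sinh (β₂ * t / 2)) := funext hβ
    rw [hfun]
    refine hder.congr_deriv ?_
    have key := riccati_alg (q * (1 - q) * (μ ^ 2 / ς ^ 2))
      (σ ^ 2 * (1 - q * ρ ^ 2) / (2 * (1 - q))) β₁ β₂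
      (Real.sinh (β₂ * t / 2)) (Real.cosh (β₂ * t / 2)) hDne hb
    linear_combination -key
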